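/- Let b₀, b₁ > 0. Then ∫ D(l₀,l₁) d(Lap(b₀) ⊗ Lap(b₁)) ≤ ∫ err*(G(l₀,l₁)) d(Lap(b₀) ⊗ Lap(b₁)) + (5/2)·(b₀ + b₁). (Utility guarantee of Proposition 2: in expectation over the Laplace noises, the prediction-change sum of Algorithm 2's classifier exceeds the expected optimal prediction-change sum by at most (5/2)(1/(n₀ε₂) + 1/(n₁ε₃)), where b₀ = 1/(n₀ε₂) and b₁ = 1/(n₁ε₃).) -/

import Mathlib

open MeasureTheory

/-- The Laplace distribution on `ℝ` with scale `b`. -/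
noncomputable def Lap (b : ℝ) : Measure ℝ :=
  volume.withDensity fun x => ENNReal.ofReal ((2 * b)⁻¹ * Real.exp (-|x| / b))

/-- Projection onto `[0,1]`. -/
noncomputable def clip (x : ℝ) : ℝ := min (max x 0) 1

/-- The statistical parity gap of Algorithm 2's classifier as a function of the Laplace
noise realizations `(l₀, l₁)`, with clipped perturbed rates `α̃ = [α+l₀]₀¹`,
`β̃ = [β+l₁]₀¹` (division by zero yields `0`, as in Lean's convention). -/
noncomputable def G (α β l₀ l₁ : ℝ) : ℝ :=
  let αt := clip (α + l₀)
  let βt := clip (β + l₁)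
  if βt ≤ αt then
    |α * (αt + βt) / (2 * αt) - β - (1 - β) * (αt - βt) / (2 * (1 - βt))|
  else
    |β * (αt + βt) / (2 * βt) - α - (1 - α) * (βt - αt) / (2 * (1 - αt))|

/-- The prediction-change sum of Algorithm 2's classifier relative to the input
classifiers, as a function of the Laplace noise realizations `(l₀, l₁)`. -/
noncomputable def Dsum (α β l₀ l₁ : ℝ) : ℝ :=
  let αt := clip (α + l₀)
  let βt := clip (β + l₁)
  if βt ≤ αt then
    α * (αt - βt) / (2 * αt) + (1 - β) * (αt - βt) / (2 * (1 - βt))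
  else
    β * (βt - αt) / (2 * βt) + (1 - α) * (βt - αt) / (2 * (1 - αt))

/-- `err*(γ)`: the optimal prediction-change sum among pairs of measurable classifiers
whose statistical parity gap is at most `γ`. -/
noncomputable def errStar {𝒳 : Type*} [MeasurableSpace 𝒳]
    (μ₀ μ₁ : Measure 𝒳) (h₀ h₁ : 𝒳 → Bool) (γ : ℝ) : ℝ :=
  sInf { r : ℝ | ∃ g₀ g₁ : 𝒳 → Bool, Measurable g₀ ∧ Measurable g₁ ∧
    |(μ₀ {x | g₀ x = true}).toReal - (μ₁ {x | g₁ x = true}).toReal| ≤ γ ∧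
    r = (μ₀ {x | g₀ x ≠ h₀ x}).toReal + (μ₁ {x | g₁ x ≠ h₁ x}).toReal }

open Set Real
open scoped ENNReal NNReal

set_option linter.unusedVariables false
set_option linter.unusedSectionVars false



lemma clip_nonneg (x : ℝ) : 0 ≤ clip x := le_min (le_max_right _ _) zero_le_one

lemma clip_le_one (x : ℝ) : clip x ≤ 1 := min_le_right _ _

lemma abs_clip_sub_le {x : ℝ} (hx0 : 0 ≤ x) (hx1 : x ≤ 1) (y : ℝ) :
    |clip y - x| ≤ |y - x| := by
  unfold clip
  rcases le_total y 0 with h | h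
  · rw [max_eq_right h, min_eq_left zero_le_one, abs_of_nonpos (by linarith),
      abs_of_nonpos (by linarith)]
    linarith
  · rw [max_eq_left h]
    rcases le_total y 1 with h1 | h1
    · rw [min_eq_left h1]
    · rw [min_eq_right h1, abs_of_nonneg (by linarith), abs_of_nonneg (by linarith)]
      linarith

/-- Core arithmetic inequality for one case. -/
lemma key {α β at' bt a c : ℝ} (hα0 : 0 ≤ α) (hα1 : α ≤ 1) (hβ0 : 0 ≤ β) (hβ1 : β ≤ 1)
    (hat0 : 0 ≤ at') (hat1 : at' ≤ 1) (hbt0 : 0 ≤ bt) (hbt1 : bt ≤ 1) (hle : bt ≤ at')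
    (ha : |at' - α| ≤ a) (hc : |bt - β| ≤ c) :
    α * (at' - bt) / (2 * at') + (1 - β) * (at' - bt) / (2 * (1 - bt)) ≤
      (|α - β| -
        |α * (at' + bt) / (2 * at') - β - (1 - β) * (at' - bt) / (2 * (1 - bt))|) +
        2 * (a + c) := by
  have ha0 : 0 ≤ a := le_trans (abs_nonneg _) ha
  have hc0 : 0 ≤ c := le_trans (abs_nonneg _) hc
  have habs : β - α ≤ |α - β| := by rw [abs_sub_comm]; exact le_abs_self _
  by_cases hat : at' = 0
  · have hbt' : bt = 0 := le_antisymm (hat ▸ hle) hbt0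
    subst hat; subst hbt'
    have hαa : α ≤ a := by rw [abs_sub_comm] at ha; simpa [abs_of_nonneg hα0] using ha
    have hβc : β ≤ c := by rw [abs_sub_comm] at hc; simpa [abs_of_nonneg hβ0] using hc
    simp only [sub_zero, sub_self, mul_zero, zero_div, zero_mul, mul_one, add_zero,
      zero_add, zero_sub, abs_neg, abs_of_nonneg hβ0]
    linarith
  by_cases hbt' : bt = 1
  · have hat' : at' = 1 := le_antisymm hat1 (hbt' ▸ hle)
    subst hbt'; subst hat'
    have e1 : α * (1 + 1) / (2 * 1) - β - (1 - β) * (1 - 1) / (2 * (1 - 1)) = α - β := by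
      norm_num
    rw [e1]
    have e2 : α * (1 - 1) / (2 * 1) + (1 - β) * (1 - 1) / (2 * (1 - 1)) = 0 := by norm_num
    rw [e2]
    linarith
  -- main case
  have hatpos : 0 < at' := lt_of_le_of_ne hat0 (Ne.symm hat)
  have hbtlt : bt < 1 := lt_of_le_of_ne hbt1 hbt'
  set d := at' - bt with hd
  have hd0 : 0 ≤ d := by simp [hd]; linarith
  have hA : (0:ℝ) < 2 * at' := by linarith
  have hB : (0:ℝ) < 2 * (1 - bt) := by linarith
  set E := α * d / (2 * at') + (1 - β) * d / (2 * (1 - bt)) with hE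
  have hGinner : α * (at' + bt) / (2 * at') - β - (1 - β) * d / (2 * (1 - bt))
      = (α - β) - E := by
    rw [hE]; field_simp; ring
  rw [hGinner]
  -- E ≥ 0
  have hE0 : 0 ≤ E := by
    apply add_nonneg
    · exact div_nonneg (mul_nonneg hα0 hd0) hA.le
    · exact div_nonneg (mul_nonneg (by linarith) hd0) hB.le
  -- E ≤ (α - β) + a + c
  have hX0 : (α - at') * d / (2 * at') ≤ a - (at' - α) := by
    rcases le_total α at' with h | h
    · have h1 : (α - at') * d / (2 * at') ≤ 0 :=
        div_nonpos_of_nonpos_of_nonneg (mul_nonpos_of_nonpos_of_nonneg (by linarith) hd0) hA.le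
      have h2 : at' - α ≤ a := le_trans (le_abs_self _) ha
      linarith
    · have h2d : 2 * d ≤ 2 * at' := by simp [hd]; linarith
      have h1 : (α - at') * d / (2 * at') ≤ (α - at') / 2 := by
        rw [div_le_div_iff₀ hA two_pos]
        nlinarith
      have h2 : α - at' ≤ a := by
        rw [abs_sub_comm] at ha; exact le_trans (le_abs_self _) ha
      linarith
  have hX1 : (bt - β) * d / (2 * (1 - bt)) ≤ c + (bt - β) := by
    rcases le_total bt β with h | h
    · have h1 : (bt - β) * d / (2 * (1 - bt)) ≤ 0 :=
        div_nonpos_of_nonpos_of_nonneg (mul_nonpos_of_nonpos_of_nonneg (by linarith) hd0) hB.le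
      have h2 : β - bt ≤ c := by
        rw [abs_sub_comm] at hc; exact le_trans (le_abs_self _) hc
      linarith
    · have h2d : 2 * d ≤ 2 * (1 - bt) := by simp [hd]; linarith
      have h1 : (bt - β) * d / (2 * (1 - bt)) ≤ (bt - β) / 2 := by
        rw [div_le_div_iff₀ hB two_pos]
        nlinarith
      linarith
  have hEd : E = d + (α - at') * d / (2 * at') + (bt - β) * d / (2 * (1 - bt)) := by
    rw [hE]; field_simp; ring
  have hEub : E ≤ (α - β) + a + c := by
    rw [hEd, hd]; rw [hd] at hX0 hX1; linarith
  -- final arithmetic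
  rcases le_total E (α - β) with h | h
  · have : |α - β - E| = (α - β) - E := by rw [abs_of_nonneg (by linarith)]
    rw [this]
    have := le_abs_self (α - β)
    linarith
  · have : |α - β - E| = E - (α - β) := by rw [abs_of_nonpos (by linarith)]; ring
    rw [this]
    have := le_abs_self (α - β)
    linarith

section errStarLemmas

variable {𝒳 : Type*} [MeasurableSpace 𝒳] (μ₀ μ₁ : Measure 𝒳)
  [IsProbabilityMeasure μ₀] [IsProbabilityMeasure μ₁] (h₀ h₁ : 𝒳 → Bool)

lemma mem_errSet {γ : ℝ} (hγ : 0 ≤ γ) :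
    (μ₀ {x | h₀ x = true}).toReal + (μ₁ {x | h₁ x = true}).toReal ∈
      { r : ℝ | ∃ g₀ g₁ : 𝒳 → Bool, Measurable g₀ ∧ Measurable g₁ ∧
        |(μ₀ {x | g₀ x = true}).toReal - (μ₁ {x | g₁ x = true}).toReal| ≤ γ ∧
        r = (μ₀ {x | g₀ x ≠ h₀ x}).toReal + (μ₁ {x | g₁ x ≠ h₁ x}).toReal } := by
  refine ⟨fun _ => false, fun _ => false, measurable_const, measurable_const, ?_, ?_⟩
  · simp [hγ]
  · have e0 : {x : 𝒳 | (fun _ => false) x ≠ h₀ x} = {x | h₀ x = true} := by ext x; cases h : h₀ x <;> simp [h]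
    have e1 : {x : 𝒳 | (fun _ => false) x ≠ h₁ x} = {x | h₁ x = true} := by ext x; cases h : h₁ x <;> simp [h]
    rw [e0, e1]

lemma errSet_bddBelow (γ : ℝ) :
    BddBelow { r : ℝ | ∃ g₀ g₁ : 𝒳 → Bool, Measurable g₀ ∧ Measurable g₁ ∧
        |(μ₀ {x | g₀ x = true}).toReal - (μ₁ {x | g₁ x = true}).toReal| ≤ γ ∧
        r = (μ₀ {x | g₀ x ≠ h₀ x}).toReal + (μ₁ {x | g₁ x ≠ h₁ x}).toReal } := by
  refine ⟨0, fun r hr => ?_⟩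
  obtain ⟨g₀, g₁, -, -, -, rfl⟩ := hr
  positivity

lemma errStar_nonneg (γ : ℝ) : 0 ≤ errStar μ₀ μ₁ h₀ h₁ γ := by
  apply Real.sInf_nonneg
  rintro r ⟨g₀, g₁, -, -, -, rfl⟩
  positivity

lemma toReal_prob_le_one {μ : Measure 𝒳} [IsProbabilityMeasure μ] (s : Set 𝒳) :
    (μ s).toReal ≤ 1 := by
  have h := prob_le_one (μ := μ) (s := s)
  simpa using ENNReal.toReal_mono ENNReal.one_ne_top h

lemma errStar_le_two {γ : ℝ} (hγ : 0 ≤ γ) : errStar μ₀ μ₁ h₀ h₁ γ ≤ 2 := by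
  refine le_trans (csInf_le (errSet_bddBelow μ₀ μ₁ h₀ h₁ γ) (mem_errSet μ₀ μ₁ h₀ h₁ hγ)) ?_
  have := toReal_prob_le_one (μ := μ₀) {x | h₀ x = true}
  have := toReal_prob_le_one (μ := μ₁) {x | h₁ x = true}
  linarith

lemma abs_toReal_sub_le (μ : Measure 𝒳) [IsProbabilityMeasure μ] (g h : 𝒳 → Bool) :
    |(μ {x | g x = true}).toReal - (μ {x | h x = true}).toReal| ≤
      (μ {x | g x ≠ h x}).toReal := by
  have key : ∀ g' h' : 𝒳 → Bool,
      (μ {x | g' x = true}).toReal ≤ (μ {x | h' x = true}).toReal + (μ {x | g' x ≠ h' x}).toReal := by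
    intro g' h'
    have hsub : {x | g' x = true} ⊆ {x | h' x = true} ∪ {x | g' x ≠ h' x} := by
      intro x hx
      by_cases hh : h' x = true
      · exact Or.inl hh
      · exact Or.inr (by simp only [mem_setOf_eq] at hx ⊢; rw [hx]; exact fun h => hh h.symm)
    have h1 : μ {x | g' x = true} ≤ μ {x | h' x = true} + μ {x | g' x ≠ h' x} :=
      le_trans (measure_mono hsub) (measure_union_le _ _)
    have h2 := ENNReal.toReal_mono
      (ENNReal.add_ne_top.mpr ⟨measure_ne_top μ _, measure_ne_top μ _⟩) h1
    rwa [ENNReal.toReal_add (measure_ne_top μ _) (measure_ne_top μ _)] at h2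
  have e : {x | h x ≠ g x} = {x | g x ≠ h x} := by ext x; simp [ne_comm]
  have k1 := key g h
  have k2 := key h g
  rw [e] at k2
  rw [abs_sub_le_iff]
  constructor <;> linarith

lemma errStar_ge {γ α β : ℝ} (hγ : 0 ≤ γ)
    (hα : α = (μ₀ {x | h₀ x = true}).toReal) (hβ : β = (μ₁ {x | h₁ x = true}).toReal) :
    |α - β| - γ ≤ errStar μ₀ μ₁ h₀ h₁ γ := by
  apply le_csInf ⟨_, mem_errSet μ₀ μ₁ h₀ h₁ hγ⟩
  rintro r ⟨g₀, g₁, -, -, hgap, rfl⟩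
  have t0 := abs_toReal_sub_le μ₀ g₀ h₀
  have t1 := abs_toReal_sub_le μ₁ g₁ h₁
  have : |α - β| ≤ (μ₀ {x | g₀ x ≠ h₀ x}).toReal + γ + (μ₁ {x | g₁ x ≠ h₁ x}).toReal := by
    have habs : |α - β| ≤ |(μ₀ {x | g₀ x = true}).toReal - α| + |(μ₀ {x | g₀ x = true}).toReal -
        (μ₁ {x | g₁ x = true}).toReal| + |(μ₁ {x | g₁ x = true}).toReal - β| := by
      have := abs_sub_le (α) ((μ₀ {x | g₀ x = true}).toReal) (β)
      have := abs_sub_le ((μ₀ {x | g₀ x = true}).toReal) ((μ₁ {x | g₁ x = true}).toReal) (β)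
      calc |α - β| ≤ |α - (μ₀ {x | g₀ x = true}).toReal| + |(μ₀ {x | g₀ x = true}).toReal - β| :=
            abs_sub_le _ _ _
        _ ≤ |α - (μ₀ {x | g₀ x = true}).toReal| + (|(μ₀ {x | g₀ x = true}).toReal -
              (μ₁ {x | g₁ x = true}).toReal| + |(μ₁ {x | g₁ x = true}).toReal - β|) := by
            linarith [abs_sub_le ((μ₀ {x | g₀ x = true}).toReal) ((μ₁ {x | g₁ x = true}).toReal) β]
        _ = _ := by rw [abs_sub_comm α]; ring
    rw [hα] at habs ⊢
    rw [hβ] at habs ⊢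
    rw [abs_sub_comm (μ₀ {x | g₀ x = true}).toReal (μ₀ {x | h₀ x = true}).toReal] at habs
    rw [abs_sub_comm (μ₁ {x | g₁ x = true}).toReal (μ₁ {x | h₁ x = true}).toReal] at habs
    rw [abs_sub_comm] at t0 t1
    linarith
  linarith

lemma errStar_antitone_max : Antitone (fun γ => errStar μ₀ μ₁ h₀ h₁ (max γ 0)) := by
  intro γ γ' hle
  apply csInf_le_csInf (errSet_bddBelow μ₀ μ₁ h₀ h₁ _) ⟨_, mem_errSet μ₀ μ₁ h₀ h₁ (le_max_right γ 0)⟩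
  rintro r ⟨g₀, g₁, m₀, m₁, hgap, rfl⟩
  exact ⟨g₀, g₁, m₀, m₁, le_trans hgap (max_le_max hle le_rfl), rfl⟩

lemma errStar_max_measurable : Measurable (fun γ => errStar μ₀ μ₁ h₀ h₁ (max γ 0)) :=
  (errStar_antitone_max μ₀ μ₁ h₀ h₁).measurable

end errStarLemmas

lemma G_nonneg (α β l₀ l₁ : ℝ) : 0 ≤ G α β l₀ l₁ := by
  unfold G
  dsimp only
  split_ifs <;> exact abs_nonneg _

lemma Dsum_pointwise {α β : ℝ} (hα0 : 0 ≤ α) (hα1 : α ≤ 1) (hβ0 : 0 ≤ β) (hβ1 : β ≤ 1)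
    (l₀ l₁ : ℝ) :
    Dsum α β l₀ l₁ ≤ (|α - β| - G α β l₀ l₁) + 2 * (|l₀| + |l₁|) := by
  have ha : |clip (α + l₀) - α| ≤ |l₀| := by
    have := abs_clip_sub_le hα0 hα1 (α + l₀); simpa using this
  have hb : |clip (β + l₁) - β| ≤ |l₁| := by
    have := abs_clip_sub_le hβ0 hβ1 (β + l₁); simpa using this
  unfold Dsum G
  dsimp only
  by_cases h : clip (β + l₁) ≤ clip (α + l₀)
  · simp only [if_pos h]
    exact key hα0 hα1 hβ0 hβ1 (clip_nonneg _) (clip_le_one _) (clip_nonneg _) (clip_le_one _)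
      h ha hb
  · simp only [if_neg h]
    have h' : clip (α + l₀) ≤ clip (β + l₁) := le_of_not_ge h
    have := key hβ0 hβ1 hα0 hα1 (clip_nonneg _) (clip_le_one _) (clip_nonneg _) (clip_le_one _)
      h' hb ha
    rw [abs_sub_comm β α, add_comm (clip (β + l₁)) (clip (α + l₀))] at this
    linarith

lemma frac_bounds {x t s : ℝ} (hx0 : 0 ≤ x) (hx1 : x ≤ 1) (h0 : 0 ≤ s) (hst : s ≤ t) :
    0 ≤ x * s / (2 * t) ∧ x * s / (2 * t) ≤ 1 / 2 := by
  have ht : 0 ≤ t := le_trans h0 hst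
  rcases eq_or_lt_of_le ht with h | h
  · have : s = 0 := le_antisymm (h ▸ hst) h0
    simp [this]
  · constructor
    · exact div_nonneg (mul_nonneg hx0 h0) (by linarith)
    · rw [div_le_div_iff₀ (by linarith) two_pos]
      nlinarith

lemma Dsum_nonneg {α β : ℝ} (hα0 : 0 ≤ α) (hα1 : α ≤ 1) (hβ0 : 0 ≤ β) (hβ1 : β ≤ 1)
    (l₀ l₁ : ℝ) : 0 ≤ Dsum α β l₀ l₁ := by
  unfold Dsum
  dsimp only
  split_ifs with h
  · exact add_nonneg
      (frac_bounds hα0 hα1 (by linarith) (by linarith [clip_nonneg (β + l₁)])).1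
      (frac_bounds (by linarith) (by linarith) (by linarith)
        (by linarith [clip_le_one (α + l₀)])).1
  · have h' : clip (α + l₀) ≤ clip (β + l₁) := le_of_not_ge h
    exact add_nonneg
      (frac_bounds hβ0 hβ1 (by linarith) (by linarith [clip_nonneg (α + l₀)])).1
      (frac_bounds (by linarith) (by linarith) (by linarith)
        (by linarith [clip_le_one (β + l₁)])).1

lemma Dsum_le_one {α β : ℝ} (hα0 : 0 ≤ α) (hα1 : α ≤ 1) (hβ0 : 0 ≤ β) (hβ1 : β ≤ 1)
    (l₀ l₁ : ℝ) : Dsum α β l₀ l₁ ≤ 1 := by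
  unfold Dsum
  dsimp only
  split_ifs with h
  · have t1 := (frac_bounds (s := clip (α + l₀) - clip (β + l₁)) (t := clip (α + l₀))
      hα0 hα1 (by linarith) (by linarith [clip_nonneg (β + l₁)])).2
    have t2 := (frac_bounds (x := 1 - β) (s := clip (α + l₀) - clip (β + l₁))
      (t := 1 - clip (β + l₁)) (by linarith) (by linarith)
      (by linarith) (by linarith [clip_le_one (α + l₀)])).2
    linarith
  · have h' : clip (α + l₀) ≤ clip (β + l₁) := le_of_not_ge h
    have t1 := (frac_bounds (s := clip (β + l₁) - clip (α + l₀)) (t := clip (β + l₁))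
      hβ0 hβ1 (by linarith) (by linarith [clip_nonneg (α + l₀)])).2
    have t2 := (frac_bounds (x := 1 - α) (s := clip (β + l₁) - clip (α + l₀))
      (t := 1 - clip (α + l₀)) (by linarith) (by linarith)
      (by linarith) (by linarith [clip_le_one (β + l₁)])).2
    linarith

lemma measurable_clip : Measurable clip :=
  ((continuous_id.max continuous_const).min continuous_const).measurable

lemma measurable_Dsum (α β : ℝ) : Measurable (fun p : ℝ × ℝ => Dsum α β p.1 p.2) := by
  have hαt : Measurable (fun p : ℝ × ℝ => clip (α + p.1)) :=
    measurable_clip.comp (measurable_const.add measurable_fst)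
  have hβt : Measurable (fun p : ℝ × ℝ => clip (β + p.2)) :=
    measurable_clip.comp (measurable_const.add measurable_snd)
  unfold Dsum
  dsimp only
  apply Measurable.ite (measurableSet_le hβt hαt)
  · exact ((measurable_const.mul (hαt.sub hβt)).div (measurable_const.mul hαt)).add
      ((measurable_const.mul (hαt.sub hβt)).div (measurable_const.mul (measurable_const.sub hβt)))
  · exact ((measurable_const.mul (hβt.sub hαt)).div (measurable_const.mul hβt)).add
      ((measurable_const.mul (hβt.sub hαt)).div (measurable_const.mul (measurable_const.sub hαt)))

lemma measurable_G (α β : ℝ) : Measurable (fun p : ℝ × ℝ => G α β p.1 p.2) := by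
  have hαt : Measurable (fun p : ℝ × ℝ => clip (α + p.1)) :=
    measurable_clip.comp (measurable_const.add measurable_fst)
  have hβt : Measurable (fun p : ℝ × ℝ => clip (β + p.2)) :=
    measurable_clip.comp (measurable_const.add measurable_snd)
  unfold G
  dsimp only
  apply Measurable.ite (measurableSet_le hβt hαt)
  · exact (((measurable_const.mul (hαt.add hβt)).div (measurable_const.mul hαt)).sub
      measurable_const |>.sub
      ((measurable_const.mul (hαt.sub hβt)).div (measurable_const.mul (measurable_const.sub hβt)))).abs
  · exact (((measurable_const.mul (hαt.add hβt)).div (measurable_const.mul hβt)).sub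
      measurable_const |>.sub
      ((measurable_const.mul (hβt.sub hαt)).div (measurable_const.mul (measurable_const.sub hαt)))).abs

lemma integrable_comp_abs' {f : ℝ → ℝ} (hf : IntegrableOn f (Ioi 0)) :
    Integrable (fun x : ℝ => f |x|) := by
  rw [← integrableOn_univ, ← Iio_union_Ici (a := (0:ℝ)), integrableOn_union,
    integrableOn_Ici_iff_integrableOn_Ioi]
  constructor
  · rw [← (Measure.measurePreserving_neg (volume : Measure ℝ)).integrableOn_comp_preimage
        (Homeomorph.neg ℝ).measurableEmbedding]
    simp only [Function.comp_def, abs_neg, neg_preimage, neg_Iio, neg_zero]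
    exact hf.congr_fun (fun x hx => by rw [abs_of_pos hx]) measurableSet_Ioi
  · exact hf.congr_fun (fun x hx => by rw [abs_of_pos hx]) measurableSet_Ioi

variable {b : ℝ}

lemma exp_on_Ioi (hb : 0 < b) : IntegrableOn (fun t : ℝ => Real.exp (-t / b)) (Ioi 0) := by
  have h := exp_neg_integrableOn_Ioi 0 (inv_pos.mpr hb)
  refine h.congr_fun (fun x _ => ?_) measurableSet_Ioi
  congr 1
  ring

lemma mul_exp_on_Ioi (hb : 0 < b) :
    IntegrableOn (fun t : ℝ => t * Real.exp (-t / b)) (Ioi 0) := by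
  have h := integrableOn_rpow_mul_exp_neg_mul_rpow (p := 1) (s := 1) (b := b⁻¹)
    (by norm_num) one_pos (inv_pos.mpr hb)
  refine h.congr_fun (fun x _ => ?_) measurableSet_Ioi
  simp only [Real.rpow_one]
  congr 1
  ring

lemma integral_exp_Ioi (hb : 0 < b) : ∫ t in Ioi (0:ℝ), Real.exp (-t / b) = b := by
  have h := Real.integral_rpow_mul_exp_neg_mul_Ioi (a := 1) (r := b⁻¹) one_pos (inv_pos.mpr hb)
  simp only [sub_self, Real.rpow_zero, one_mul, Real.rpow_one, Real.Gamma_one, mul_one,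
    one_div, inv_inv] at h
  refine Eq.trans ?_ h
  refine setIntegral_congr_fun measurableSet_Ioi (fun x _ => ?_)
  congr 1
  ring

lemma integral_mul_exp_Ioi (hb : 0 < b) :
    ∫ t in Ioi (0:ℝ), t * Real.exp (-t / b) = b ^ 2 := by
  have h := Real.integral_rpow_mul_exp_neg_mul_Ioi (a := 2) (r := b⁻¹) two_pos (inv_pos.mpr hb)
  have h2 : Real.Gamma 2 = 1 := by
    rw [show (2:ℝ) = (1:ℕ) + 1 by norm_num, Real.Gamma_nat_eq_factorial]
    simp
  rw [h2, mul_one, one_div, inv_inv] at h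
  have h3 : b ^ ((2:ℝ)) = b ^ 2 := by
    rw [show ((2:ℝ)) = ((2:ℕ):ℝ) by norm_num, Real.rpow_natCast]
  rw [← h3]
  refine Eq.trans ?_ h
  refine setIntegral_congr_fun measurableSet_Ioi (fun x _ => ?_)
  rw [show (2:ℝ) - 1 = 1 by norm_num, Real.rpow_one]
  congr 1
  ring

lemma lap_density_integrable (hb : 0 < b) :
    Integrable (fun x : ℝ => (2 * b)⁻¹ * Real.exp (-|x| / b)) :=
  integrable_comp_abs' (f := fun t => (2 * b)⁻¹ * Real.exp (-t / b))
    ((exp_on_Ioi hb).const_mul _)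

lemma lap_abs_density_integrable (hb : 0 < b) :
    Integrable (fun x : ℝ => |x| * ((2 * b)⁻¹ * Real.exp (-|x| / b))) := by
  have h : IntegrableOn (fun t : ℝ => t * ((2 * b)⁻¹ * Real.exp (-t / b))) (Ioi 0) := by
    have h0 : IntegrableOn (fun t : ℝ => (2 * b)⁻¹ * (t * Real.exp (-t / b))) (Ioi 0) :=
      (mul_exp_on_Ioi hb).const_mul ((2 * b)⁻¹)
    refine h0.congr_fun (fun x _ => by ring) measurableSet_Ioi
  exact integrable_comp_abs' (f := fun t => t * ((2 * b)⁻¹ * Real.exp (-t / b))) h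

lemma integral_lap_density (hb : 0 < b) :
    ∫ x : ℝ, (2 * b)⁻¹ * Real.exp (-|x| / b) = 1 := by
  rw [integral_const_mul _ _, integral_comp_abs (f := fun t => Real.exp (-t / b)),
    integral_exp_Ioi hb]
  field_simp

lemma lap_measurable_density (b : ℝ) :
    Measurable (fun x : ℝ => (2 * b)⁻¹ * Real.exp (-|x| / b)) := by
  fun_prop

lemma lapProb (hb : 0 < b) : IsProbabilityMeasure (Lap b) := by
  constructor
  rw [Lap, withDensity_apply _ MeasurableSet.univ, Measure.restrict_univ,
    ← ofReal_integral_eq_lintegral_ofReal (lap_density_integrable hb)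
      (Filter.Eventually.of_forall (fun x => by positivity)),
    integral_lap_density hb, ENNReal.ofReal_one]

lemma Lap_eq_withDensity_nnreal (b : ℝ) :
    Lap b = volume.withDensity
      (fun x => (((((2 * b)⁻¹ * Real.exp (-|x| / b)).toNNReal) : ℝ≥0) : ℝ≥0∞)) := rfl

lemma integral_abs_Lap (hb : 0 < b) : ∫ x, |x| ∂(Lap b) = b := by
  rw [Lap_eq_withDensity_nnreal,
    integral_withDensity_eq_integral_smul ((lap_measurable_density b).real_toNNReal)
      (fun x => |x|)]
  have : ∀ x : ℝ, (((2 * b)⁻¹ * Real.exp (-|x| / b)).toNNReal : ℝ≥0) • |x|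
      = (2 * b)⁻¹ * (|x| * Real.exp (-|x| / b)) := by
    intro x
    rw [NNReal.smul_def, Real.coe_toNNReal _ (by positivity), smul_eq_mul]
    ring
  rw [integral_congr_ae (Filter.Eventually.of_forall this), integral_const_mul _ _,
    integral_comp_abs (f := fun t => t * Real.exp (-t / b)), integral_mul_exp_Ioi hb]
  field_simp

lemma integrable_abs_Lap (hb : 0 < b) : Integrable (fun x : ℝ => |x|) (Lap b) := by
  rw [Lap, integrable_withDensity_iff ((lap_measurable_density b).ennreal_ofReal)
    (Filter.Eventually.of_forall (fun x => ENNReal.ofReal_lt_top))]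
  refine (lap_abs_density_integrable hb).congr
    (Filter.Eventually.of_forall (fun x => ?_))
  dsimp only
  rw [ENNReal.toReal_ofReal (by positivity)]

/-- **Proposition 2 (utility guarantee).** In expectation over the independent Laplace
noises, the prediction-change sum of Algorithm 2's classifier exceeds the expected optimal
prediction-change sum by at most `(5/2)·(b₀ + b₁)`. -/
theorem algorithm2_utility_expectation
    {𝒳 : Type*} [MeasurableSpace 𝒳] [Nonempty 𝒳]
    (μ₀ μ₁ : Measure 𝒳) [IsProbabilityMeasure μ₀] [IsProbabilityMeasure μ₁]
    (h₀ h₁ : 𝒳 → Bool) (hm₀ : Measurable h₀) (hm₁ : Measurable h₁)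
    (α β : ℝ)
    (hα : α = (μ₀ {x | h₀ x = true}).toReal)
    (hβ : β = (μ₁ {x | h₁ x = true}).toReal)
    (b₀ b₁ : ℝ) (hb₀ : 0 < b₀) (hb₁ : 0 < b₁) :
    ∫ p : ℝ × ℝ, Dsum α β p.1 p.2 ∂((Lap b₀).prod (Lap b₁)) ≤
      (∫ p : ℝ × ℝ, errStar μ₀ μ₁ h₀ h₁ (G α β p.1 p.2) ∂((Lap b₀).prod (Lap b₁))) +
        (5 / 2) * (b₀ + b₁) := by
  have hα0 : 0 ≤ α := hα ▸ ENNReal.toReal_nonneg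
  have hβ0 : 0 ≤ β := hβ ▸ ENNReal.toReal_nonneg
  have hα1 : α ≤ 1 := hα ▸ toReal_prob_le_one _
  have hβ1 : β ≤ 1 := hβ ▸ toReal_prob_le_one _
  haveI : IsProbabilityMeasure (Lap b₀) := lapProb hb₀
  haveI : IsProbabilityMeasure (Lap b₁) := lapProb hb₁
  set P := (Lap b₀).prod (Lap b₁) with hP
  -- integrability of the various functions
  have hDint : Integrable (fun p : ℝ × ℝ => Dsum α β p.1 p.2) P := by
    refine Integrable.mono' (integrable_const 1) (measurable_Dsum α β).aestronglyMeasurable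
      (Filter.Eventually.of_forall fun p => ?_)
    rw [Real.norm_eq_abs, abs_of_nonneg (Dsum_nonneg hα0 hα1 hβ0 hβ1 _ _)]
    exact Dsum_le_one hα0 hα1 hβ0 hβ1 _ _
  have hErrEq : (fun p : ℝ × ℝ => errStar μ₀ μ₁ h₀ h₁ (G α β p.1 p.2)) =
      fun p : ℝ × ℝ => (fun γ => errStar μ₀ μ₁ h₀ h₁ (max γ 0)) (G α β p.1 p.2) :=
    funext fun p =>
      (congrArg (errStar μ₀ μ₁ h₀ h₁) (max_eq_left (G_nonneg α β p.1 p.2))).symm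
  have hEmeas : Measurable (fun p : ℝ × ℝ => errStar μ₀ μ₁ h₀ h₁ (G α β p.1 p.2)) := by
    rw [hErrEq]
    exact (errStar_max_measurable μ₀ μ₁ h₀ h₁).comp (measurable_G α β)
  have hEint : Integrable (fun p : ℝ × ℝ => errStar μ₀ μ₁ h₀ h₁ (G α β p.1 p.2)) P := by
    refine Integrable.mono' (integrable_const 2) hEmeas.aestronglyMeasurable
      (Filter.Eventually.of_forall fun p => ?_)
    rw [Real.norm_eq_abs, abs_of_nonneg (errStar_nonneg μ₀ μ₁ h₀ h₁ _)]
    exact errStar_le_two μ₀ μ₁ h₀ h₁ (G_nonneg α β p.1 p.2)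
  have hmap0 : Measure.map Prod.fst P = Lap b₀ := by
    rw [hP, Measure.map_fst_prod, measure_univ, one_smul]
  have hmap1 : Measure.map Prod.snd P = Lap b₁ := by
    rw [hP, Measure.map_snd_prod, measure_univ, one_smul]
  have hAint : Integrable (fun p : ℝ × ℝ => |p.1|) P := by
    have h := integrable_abs_Lap hb₀
    rw [← hmap0] at h
    exact (integrable_map_measure measurable_abs.aestronglyMeasurable
      measurable_fst.aemeasurable).mp h
  have hBint : Integrable (fun p : ℝ × ℝ => |p.2|) P := by
    have h := integrable_abs_Lap hb₁
    rw [← hmap1] at h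
    exact (integrable_map_measure measurable_abs.aestronglyMeasurable
      measurable_snd.aemeasurable).mp h
  have hA : ∫ p : ℝ × ℝ, |p.1| ∂P = b₀ := by
    rw [← integral_abs_Lap hb₀, ← hmap0,
      integral_map measurable_fst.aemeasurable measurable_abs.aestronglyMeasurable]
  have hB : ∫ p : ℝ × ℝ, |p.2| ∂P = b₁ := by
    rw [← integral_abs_Lap hb₁, ← hmap1,
      integral_map measurable_snd.aemeasurable measurable_abs.aestronglyMeasurable]
  have hABint : Integrable (fun p : ℝ × ℝ => |p.1| + |p.2|) P := hAint.add hBint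
  have h2int : Integrable (fun p : ℝ × ℝ => 2 * (|p.1| + |p.2|)) P := hABint.const_mul 2
  have hRHSint : Integrable
      (fun p : ℝ × ℝ => errStar μ₀ μ₁ h₀ h₁ (G α β p.1 p.2) + 2 * (|p.1| + |p.2|)) P :=
    hEint.add h2int
  have hmono : ∫ p : ℝ × ℝ, Dsum α β p.1 p.2 ∂P ≤
      ∫ p : ℝ × ℝ, (errStar μ₀ μ₁ h₀ h₁ (G α β p.1 p.2) + 2 * (|p.1| + |p.2|)) ∂P := by
    refine integral_mono hDint hRHSint fun p => ?_
    have h1 := Dsum_pointwise hα0 hα1 hβ0 hβ1 p.1 p.2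
    have h2 := errStar_ge μ₀ μ₁ h₀ h₁ (G_nonneg α β p.1 p.2) hα hβ
    dsimp only
    linarith
  have heq2 : ∫ p : ℝ × ℝ, (errStar μ₀ μ₁ h₀ h₁ (G α β p.1 p.2) + 2 * (|p.1| + |p.2|)) ∂P =
      (∫ p : ℝ × ℝ, errStar μ₀ μ₁ h₀ h₁ (G α β p.1 p.2) ∂P) + 2 * (b₀ + b₁) := by
    rw [integral_add hEint h2int, integral_const_mul, integral_add hAint hBint, hA, hB]
  rw [heq2] at hmono
  linarith
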